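/- arXiv:2210.14477 — 7 statements merged into one kernel-verified Lean document; each statement's English description precedes it below -/
import Mathlib

section
/- Let k be a positive semi-definite kernel on a set X with k(z,z) > 0 for all z. Then the function d_k(z,w) = sqrt(1 − |k(z,w)|² / (k(z,z)·k(w,w))) defines a pseudometric on X; in particular it satisfies the triangle inequality d_k(x,z) ≤ d_k(x,y) + d_k(y,z). -/
open scoped ComplexOrder
/-- A positive semi-definite kernel on `X`: every finite matrix `[k (x i) (x j)]`
is positive semi-definite. -/
def IsPSDKernel {X : Type*} (k : X → X → ℂ) : Prop :=
  ∀ (n : ℕ) (x : Fin n → X), (Matrix.of fun i j : Fin n => k (x i) (x j)).PosSemidef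

lemma psd_det_re_nonneg {n : ℕ} {M : Matrix (Fin n) (Fin n) ℂ} (hM : M.PosSemidef) :
    0 ≤ M.det.re := by
  classical
  rw [hM.1.det_eq_prod_eigenvalues, ← RCLike.ofReal_prod]
  have h : (0:ℝ) ≤ ∏ i, hM.1.eigenvalues i :=
    Finset.prod_nonneg fun i _ => hM.eigenvalues_nonneg i
  exact (Complex.ofReal_re _) ▸ h

/-- Hermitian symmetry of a PSD kernel. -/
lemma psd_kernel_conj {X : Type*} {k : X → X → ℂ} (hk : IsPSDKernel k) (u v : X) :
    k v u = starRingEnd ℂ (k u v) := by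
  have h := (hk 2 ![u, v]).1
  have := congrFun (congrFun h 1) 0
  simpa [Matrix.conjTranspose_apply] using this.symm

/-- Diagonal entries are real. -/
lemma psd_kernel_diag_im {X : Type*} {k : X → X → ℂ} (hk : IsPSDKernel k) (u : X) :
    (k u u).im = 0 := by
  have h := psd_kernel_conj hk u u
  have : (k u u).im = -(k u u).im := by
    conv_lhs => rw [h]
    simp
  linarith

/-- Cauchy–Schwarz for a PSD kernel. -/
lemma psd_kernel_cs {X : Type*} {k : X → X → ℂ} (hk : IsPSDKernel k) (u v : X) :
    ‖k u v‖ ^ 2 ≤ (k u u).re * (k v v).re := by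
  have hdet := psd_det_re_nonneg (hk 2 ![u, v])
  rw [Matrix.det_fin_two] at hdet
  simp only [Matrix.of_apply, Matrix.cons_val', Matrix.cons_val_zero, Matrix.cons_val_one,
    Matrix.head_cons, Matrix.empty_val', Matrix.cons_val_fin_one, Matrix.head_fin_const] at hdet
  rw [psd_kernel_conj hk u v] at hdet
  have him_u := psd_kernel_diag_im hk u
  have him_v := psd_kernel_diag_im hk v
  have habs : ‖k u v‖ ^ 2 = (k u v).re ^ 2 + (k u v).im ^ 2 := by
    rw [Complex.sq_norm, Complex.normSq_apply]; ring
  simp only [Complex.sub_re, Complex.mul_re, Complex.conj_re, Complex.conj_im, him_u, him_v] at hdet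
  rw [habs]
  nlinarith [hdet]

private lemma kernel_aux (a b c s t : ℝ) (ha : 0 ≤ a) (hb : 0 ≤ b) (hc : 0 ≤ c)
    (ha1 : a ≤ 1) (hb1 : b ≤ 1) (hs : 0 ≤ s) (ht : 0 ≤ t)
    (hs2 : s ^ 2 = 1 - a ^ 2) (ht2 : t ^ 2 = 1 - b ^ 2)
    (hkey : a ^ 2 + b ^ 2 + c ^ 2 ≤ 1 + 2 * (a * b * c)) :
    1 - c ^ 2 ≤ (s + t) ^ 2 := by
  have hst : 0 ≤ s * t := mul_nonneg hs ht
  have hst2 : (s * t) ^ 2 = (1 - a ^ 2) * (1 - b ^ 2) := by rw [mul_pow, hs2, ht2]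
  have hab1 : a * b ≤ 1 := mul_le_one₀ ha1 hb hb1
  rcases le_or_gt (a * b) (s * t) with h | h
  · nlinarith [sq_nonneg (a - b), sq_nonneg c]
  · have h1 : (c - a * b) ^ 2 ≤ (s * t) ^ 2 := by nlinarith [hst2]
    have h2 : a * b - s * t ≤ c := by
      by_contra hcon
      push_neg at hcon
      have hpos1 : (0:ℝ) < a * b - s * t - c := by linarith
      have hpos2 : (0:ℝ) < a * b + s * t - c := by linarith
      nlinarith [mul_pos hpos1 hpos2]
    have h3 : 0 ≤ a * b - s * t := by linarith
    have h4 : (a * b - s * t) ^ 2 ≤ c ^ 2 := pow_le_pow_left₀ h3 h2 2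
    have hA : (0:ℝ) ≤ 1 - a ^ 2 := hs2 ▸ sq_nonneg s
    have hB : (0:ℝ) ≤ 1 - b ^ 2 := ht2 ▸ sq_nonneg t
    nlinarith [h4, hst2, mul_nonneg hst (by linarith : (0:ℝ) ≤ 1 - a * b),
      mul_nonneg hA hB]

set_option maxHeartbeats 1000000 in
/-- The kernel pseudometric `d_k(z,w) = sqrt(1 − |k(z,w)|²/(k(z,z)·k(w,w)))` associated
to a positive semi-definite kernel with positive diagonal satisfies the triangle
inequality. -/
theorem kernel_pseudometric_triangle {X : Type*} (k : X → X → ℂ)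
    (hk : IsPSDKernel k) (hdiag : ∀ z, 0 < (k z z).re) (x y z : X) :
    Real.sqrt (1 - ‖k x z‖ ^ 2 / ((k x x).re * (k z z).re)) ≤
      Real.sqrt (1 - ‖k x y‖ ^ 2 / ((k x x).re * (k y y).re)) +
        Real.sqrt (1 - ‖k y z‖ ^ 2 / ((k y y).re * (k z z).re)) := by
  have hp := hdiag x; have hq := hdiag y; have hr := hdiag z
  set p := (k x x).re with hpdef
  set q := (k y y).re with hqdef
  set r := (k z z).re with hrdef
  -- determinant of the 3×3 Gram matrix
  have hdet := psd_det_re_nonneg (hk 3 ![x, y, z])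
  rw [Matrix.det_fin_three] at hdet
  simp only [Matrix.of_apply, Matrix.cons_val', Matrix.cons_val_zero, Matrix.cons_val_one,
    Matrix.head_cons, Matrix.empty_val', Matrix.cons_val_fin_one, Matrix.head_fin_const,
    Matrix.cons_val_two, Matrix.tail_cons] at hdet
  rw [psd_kernel_conj hk x y, psd_kernel_conj hk x z, psd_kernel_conj hk y z] at hdet
  set α := k x y
  set β := k y z
  set γ := k x z
  have himx := psd_kernel_diag_im hk x
  have himy := psd_kernel_diag_im hk y
  have himz := psd_kernel_diag_im hk z
  -- rewrite det.re
  have hdet' : p * q * r - p * ‖β‖ ^ 2 - r * ‖α‖ ^ 2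
      - q * ‖γ‖ ^ 2 + 2 * (α * β * starRingEnd ℂ γ).re ≥ 0 := by
    have e1 : ‖α‖ ^ 2 = (α.re) ^ 2 + (α.im) ^ 2 := by
      rw [Complex.sq_norm, Complex.normSq_apply]; ring
    have e2 : ‖β‖ ^ 2 = (β.re) ^ 2 + (β.im) ^ 2 := by
      rw [Complex.sq_norm, Complex.normSq_apply]; ring
    have e3 : ‖γ‖ ^ 2 = (γ.re) ^ 2 + (γ.im) ^ 2 := by
      rw [Complex.sq_norm, Complex.normSq_apply]; ring
    rw [e1, e2, e3]
    simp only [Complex.add_re, Complex.sub_re, Complex.mul_re, Complex.mul_im,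
      Complex.conj_re, Complex.conj_im, himx, himy, himz] at hdet ⊢
    rw [← hpdef, ← hqdef, ← hrdef] at hdet
    linarith [hdet]
  have hre_le : (α * β * starRingEnd ℂ γ).re ≤ ‖α‖ * ‖β‖ * ‖γ‖ := by
    calc (α * β * starRingEnd ℂ γ).re ≤ ‖α * β * starRingEnd ℂ γ‖ :=
          Complex.re_le_norm _
      _ = ‖α‖ * ‖β‖ * ‖γ‖ := by
          simp [map_mul, Complex.norm_conj]
  -- normalized quantities
  have hpq : (0:ℝ) < p * q := mul_pos hp hq
  have hqr : (0:ℝ) < q * r := mul_pos hq hr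
  have hpr : (0:ℝ) < p * r := mul_pos hp hr
  set a := ‖α‖ / Real.sqrt (p * q) with hadef
  set b := ‖β‖ / Real.sqrt (q * r) with hbdef
  set c := ‖γ‖ / Real.sqrt (p * r) with hcdef
  have hspq : Real.sqrt (p * q) ^ 2 = p * q := Real.sq_sqrt hpq.le
  have hsqr : Real.sqrt (q * r) ^ 2 = q * r := Real.sq_sqrt hqr.le
  have hspr : Real.sqrt (p * r) ^ 2 = p * r := Real.sq_sqrt hpr.le
  have hspq0 : (0:ℝ) < Real.sqrt (p * q) := Real.sqrt_pos.mpr hpq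
  have hsqr0 : (0:ℝ) < Real.sqrt (q * r) := Real.sqrt_pos.mpr hqr
  have hspr0 : (0:ℝ) < Real.sqrt (p * r) := Real.sqrt_pos.mpr hpr
  have ha2 : a ^ 2 = ‖α‖ ^ 2 / (p * q) := by
    rw [hadef, div_pow, hspq]
  have hb2 : b ^ 2 = ‖β‖ ^ 2 / (q * r) := by
    rw [hbdef, div_pow, hsqr]
  have hc2 : c ^ 2 = ‖γ‖ ^ 2 / (p * r) := by
    rw [hcdef, div_pow, hspr]
  have ha0 : 0 ≤ a := div_nonneg (norm_nonneg _) hspq0.le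
  have hb0 : 0 ≤ b := div_nonneg (norm_nonneg _) hsqr0.le
  have hc0 : 0 ≤ c := div_nonneg (norm_nonneg _) hspr0.le
  have hcsα := psd_kernel_cs hk x y
  have hcsβ := psd_kernel_cs hk y z
  have hcsγ := psd_kernel_cs hk x z
  rw [← hpdef, ← hqdef] at hcsα
  rw [← hqdef, ← hrdef] at hcsβ
  rw [← hpdef, ← hrdef] at hcsγ
  have ha2le : a ^ 2 ≤ 1 := by rw [ha2]; exact div_le_one_of_le₀ hcsα hpq.le
  have hb2le : b ^ 2 ≤ 1 := by rw [hb2]; exact div_le_one_of_le₀ hcsβ hqr.le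
  have ha1 : a ≤ 1 := (pow_le_one_iff_of_nonneg ha0 two_ne_zero).mp ha2le
  have hb1 : b ≤ 1 := (pow_le_one_iff_of_nonneg hb0 two_ne_zero).mp hb2le
  have hprod : Real.sqrt (p * q) * Real.sqrt (q * r) * Real.sqrt (p * r) = p * q * r := by
    rw [← Real.sqrt_mul hpq.le, ← Real.sqrt_mul (by positivity)]
    rw [show p * q * (q * r) * (p * r) = (p * q * r) ^ 2 by ring]
    exact Real.sqrt_sq (by positivity)
  have habc : a * b * c = ‖α‖ * ‖β‖ * ‖γ‖ / (p * q * r) := by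
    rw [hadef, hbdef, hcdef, div_mul_div_comm, div_mul_div_comm, hprod]
  have hkey : a ^ 2 + b ^ 2 + c ^ 2 ≤ 1 + 2 * (a * b * c) := by
    rw [ha2, hb2, hc2, habc, ← sub_nonneg]
    have expand : 1 + 2 * (‖α‖ * ‖β‖ * ‖γ‖ / (p * q * r)) -
        (‖α‖ ^ 2 / (p * q) + ‖β‖ ^ 2 / (q * r) + ‖γ‖ ^ 2 / (p * r)) =
        (p * q * r - p * ‖β‖ ^ 2 - r * ‖α‖ ^ 2 - q * ‖γ‖ ^ 2 +
          2 * (‖α‖ * ‖β‖ * ‖γ‖)) / (p * q * r) := by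
      field_simp
      ring
    rw [expand]
    apply div_nonneg _ (by positivity)
    linarith [hdet', hre_le]
  have hA : (0:ℝ) ≤ 1 - a ^ 2 := by linarith [ha2le]
  have hB : (0:ℝ) ≤ 1 - b ^ 2 := by linarith [hb2le]
  rw [← ha2, ← hb2, ← hc2]
  set s := Real.sqrt (1 - a ^ 2) with hsdef
  set t := Real.sqrt (1 - b ^ 2) with htdef
  have hs2 : s ^ 2 = 1 - a ^ 2 := Real.sq_sqrt hA
  have ht2 : t ^ 2 = 1 - b ^ 2 := Real.sq_sqrt hB
  have htri : 1 - c ^ 2 ≤ (s + t) ^ 2 :=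
    kernel_aux a b c s t ha0 hb0 hc0 ha1 hb1 (Real.sqrt_nonneg _) (Real.sqrt_nonneg _) hs2 ht2 hkey
  calc Real.sqrt (1 - c ^ 2) ≤ Real.sqrt ((s + t) ^ 2) := Real.sqrt_le_sqrt htri
    _ = s + t := Real.sqrt_sq (by positivity)
end

section
/- Let ℓ be a positive semi-definite kernel on a topological space X with ℓ(z,z) > 0, satisfying: (Q1) ℓ is jointly continuous on X × X, and (Q2) whenever ‖ℓ_{λᵢ}‖ → ∞ one has ℓ(λᵢ, μ)/‖ℓ_{λᵢ}‖ → 0 for every μ ∈ X. If {wᵢ} and {zᵢ} are sequences in X with wᵢ → w for some w ∈ X and ‖ℓ_{zᵢ}‖ → ∞, then d_ℓ(wᵢ, zᵢ) → 1, where d_ℓ(x,y) = sqrt(1 − |ℓ(x,y)|²/(ℓ(x,x)ℓ(y,y))). -/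
open scoped ComplexOrder
open Filter

/-- Cauchy–Schwarz for a positive semidefinite matrix. -/
lemma psd_cs {n : ℕ} {M : Matrix (Fin n) (Fin n) ℂ} (hM : M.PosSemidef)
    (v u : Fin n → ℂ) :
    ‖dotProduct (star v) (M.mulVec u)‖ ^ 2 ≤
      (dotProduct (star v) (M.mulVec v)).re *
      (dotProduct (star u) (M.mulVec u)).re := by
  open scoped MatrixOrder in obtain ⟨B, rfl⟩ := CStarAlgebra.nonneg_iff_eq_star_mul_self.mp hM.nonneg
  rw [Matrix.star_eq_conjTranspose]
  have key : ∀ a b : Fin n → ℂ,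
      dotProduct (star a) ((B.conjTranspose * B).mulVec b)
        = inner ℂ ((WithLp.equiv 2 _).symm (B.mulVec a) : EuclideanSpace ℂ (Fin n))
            ((WithLp.equiv 2 _).symm (B.mulVec b)) := by
    intro a b
    show _ = dotProduct (B.mulVec b) (star (B.mulVec a))
    rw [dotProduct_comm (B.mulVec b), ← Matrix.mulVec_mulVec,
      Matrix.dotProduct_mulVec, Matrix.star_mulVec]
  have hsq : ∀ a : Fin n → ℂ,
      (dotProduct (star a) ((B.conjTranspose * B).mulVec a)).re
        = ‖((WithLp.equiv 2 _).symm (B.mulVec a) : EuclideanSpace ℂ (Fin n))‖ ^ 2 := by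
    intro a
    rw [key, inner_self_eq_norm_sq_to_K]
    norm_cast
  rw [key, hsq, hsq]
  calc ‖(inner ℂ ((WithLp.equiv 2 _).symm (B.mulVec v) : EuclideanSpace ℂ (Fin n))
        ((WithLp.equiv 2 _).symm (B.mulVec u)))‖ ^ 2
      ≤ (‖((WithLp.equiv 2 _).symm (B.mulVec v) : EuclideanSpace ℂ (Fin n))‖ *
          ‖((WithLp.equiv 2 _).symm (B.mulVec u) : EuclideanSpace ℂ (Fin n))‖) ^ 2 := by
        gcongr
        exact norm_inner_le_norm _ _
    _ = _ := by ring

/-- Cauchy–Schwarz for the "difference" vector: `|ℓ x u - ℓ y u|² ≤ ‖ℓ_x - ℓ_y‖² ‖ℓ_u‖²`. -/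
lemma kernel_cs3 {X : Type*} {ℓ : X → X → ℂ} (hpsd : IsPSDKernel ℓ) (x y u : X) :
    ‖ℓ x u - ℓ y u‖ ^ 2 ≤
      (ℓ x x - ℓ x y - ℓ y x + ℓ y y).re * (ℓ u u).re := by
  have h := psd_cs (hpsd 3 ![x, y, u]) ![1, -1, 0] ![0, 0, 1]
  have e1 : dotProduct (star ![(1:ℂ), -1, 0])
      ((Matrix.of fun i j : Fin 3 => ℓ (![x,y,u] i) (![x,y,u] j)).mulVec ![0, 0, 1])
      = ℓ x u - ℓ y u := by
    simp [dotProduct, Matrix.mulVec, Fin.sum_univ_three]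
    ring
  have e2 : dotProduct (star ![(1:ℂ), -1, 0])
      ((Matrix.of fun i j : Fin 3 => ℓ (![x,y,u] i) (![x,y,u] j)).mulVec ![1, -1, 0])
      = ℓ x x - ℓ x y - ℓ y x + ℓ y y := by
    simp [dotProduct, Matrix.mulVec, Fin.sum_univ_three]
    ring
  have e3 : dotProduct (star ![(0:ℂ), 0, 1])
      ((Matrix.of fun i j : Fin 3 => ℓ (![x,y,u] i) (![x,y,u] j)).mulVec ![0, 0, 1])
      = ℓ u u := by
    simp [dotProduct, Matrix.mulVec, Fin.sum_univ_three]
  rwa [e1, e2, e3] at h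

/-- `‖ℓ_x - ℓ_y‖² ≥ 0`. -/
lemma kernel_diag_diff_nonneg {X : Type*} {ℓ : X → X → ℂ} (hpsd : IsPSDKernel ℓ) (x y : X) :
    0 ≤ (ℓ x x - ℓ x y - ℓ y x + ℓ y y).re := by
  have h := (hpsd 2 ![x, y]).re_dotProduct_nonneg ![1, -1]
  have e : dotProduct (star ![(1:ℂ), -1])
      ((Matrix.of fun i j : Fin 2 => ℓ (![x,y] i) (![x,y] j)).mulVec ![1, -1])
      = ℓ x x - ℓ x y - ℓ y x + ℓ y y := by
    simp [dotProduct, Matrix.mulVec, Fin.sum_univ_two]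
    ring
  rwa [e] at h

/-- Hermitian symmetry of a PSD kernel, at the level of absolute values. -/
lemma kernel_abs_symm {X : Type*} {ℓ : X → X → ℂ} (hpsd : IsPSDKernel ℓ) (x y : X) :
    ‖ℓ x y‖ = ‖ℓ y x‖ := by
  have h := (hpsd 2 ![x, y]).isHermitian
  have := congrFun (congrFun h 1) 0
  simp [Matrix.conjTranspose_apply] at this
  rw [← this, Complex.norm_conj]

/-- Let `ℓ` be a continuous positive semi-definite kernel on a topological space with
positive diagonal such that `ℓ(λᵢ,μ)/‖ℓ_{λᵢ}‖ → 0` whenever `‖ℓ_{λᵢ}‖ → ∞` (where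
`‖ℓ_λ‖ = sqrt(ℓ(λ,λ))`). If `wᵢ → w` and `‖ℓ_{zᵢ}‖ → ∞`, then `d_ℓ(wᵢ, zᵢ) → 1`. -/
theorem kernel_dist_tendsto_one {X : Type*} [TopologicalSpace X] (ℓ : X → X → ℂ)
    (hpsd : IsPSDKernel ℓ) (hdiag : ∀ z, 0 < (ℓ z z).re)
    (hQ1 : Continuous fun p : X × X => ℓ p.1 p.2)
    (hQ2 : ∀ lam : ℕ → X,
      Tendsto (fun i => Real.sqrt (ℓ (lam i) (lam i)).re) atTop atTop →
      ∀ μ : X, Tendsto (fun i => ‖ℓ (lam i) μ‖ /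
        Real.sqrt (ℓ (lam i) (lam i)).re) atTop (nhds 0))
    (w z : ℕ → X) (w0 : X)
    (hw : Tendsto w atTop (nhds w0))
    (hz : Tendsto (fun i => Real.sqrt (ℓ (z i) (z i)).re) atTop atTop) :
    Tendsto (fun i => Real.sqrt (1 - ‖ℓ (w i) (z i)‖ ^ 2 /
        ((ℓ (w i) (w i)).re * (ℓ (z i) (z i)).re))) atTop (nhds 1) := by
  set L : ℕ → ℝ := fun i => (ℓ (z i) (z i)).re with hLdef
  have hL0 : ∀ i, 0 < L i := fun i => hdiag _
  have hs : ∀ i, 0 < Real.sqrt (L i) := fun i => Real.sqrt_pos.mpr (hL0 i)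
  have hcont : ∀ (f g : ℕ → X) (f0 g0 : X), Tendsto f atTop (nhds f0) →
      Tendsto g atTop (nhds g0) →
      Tendsto (fun i => ℓ (f i) (g i)) atTop (nhds (ℓ f0 g0)) := by
    intro f g f0 g0 hf hg
    exact (hQ1.tendsto (f0, g0)).comp (hf.prodMk_nhds hg)
  have hww : Tendsto (fun i => (ℓ (w i) (w i)).re) atTop (nhds (ℓ w0 w0).re) :=
    (Complex.continuous_re.tendsto _).comp (hcont w w w0 w0 hw hw)
  set D : ℕ → ℝ := fun i => (ℓ (w i) (w i) - ℓ (w i) w0 - ℓ w0 (w i) + ℓ w0 w0).re with hDdef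
  have hD : Tendsto D atTop (nhds 0) := by
    have h1 : Tendsto (fun i => ℓ (w i) (w i) - ℓ (w i) w0 - ℓ w0 (w i) + ℓ w0 w0)
        atTop (nhds (ℓ w0 w0 - ℓ w0 w0 - ℓ w0 w0 + ℓ w0 w0)) :=
      (((hcont w w w0 w0 hw hw).sub
        (hcont w (fun _ => w0) w0 w0 hw tendsto_const_nhds)).sub
        (hcont (fun _ => w0) w w0 w0 tendsto_const_nhds hw)).add tendsto_const_nhds
    simpa [Function.comp_def, hDdef] using (Complex.continuous_re.tendsto _).comp h1
  set b : ℕ → ℝ := fun i => ‖ℓ (w i) (z i)‖ / Real.sqrt (L i) with hbdef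
  have hb_le : ∀ i, b i ≤ Real.sqrt (D i)
      + ‖ℓ (z i) w0‖ / Real.sqrt (L i) := by
    intro i
    have habs : ‖ℓ (w i) (z i) - ℓ w0 (z i)‖ ≤
        Real.sqrt (D i) * Real.sqrt (L i) := by
      have h := Real.sqrt_le_sqrt (kernel_cs3 hpsd (w i) w0 (z i))
      rwa [Real.sqrt_sq (norm_nonneg _),
        Real.sqrt_mul (kernel_diag_diff_nonneg hpsd _ _)] at h
    have htri : ‖ℓ (w i) (z i)‖ ≤
        ‖ℓ (w i) (z i) - ℓ w0 (z i)‖ + ‖ℓ w0 (z i)‖ := by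
      simpa using norm_add_le (ℓ (w i) (z i) - ℓ w0 (z i)) (ℓ w0 (z i))
    calc b i ≤ (‖ℓ (w i) (z i) - ℓ w0 (z i)‖ + ‖ℓ w0 (z i)‖)
          / Real.sqrt (L i) :=
          div_le_div_of_nonneg_right htri (hs i).le
      _ = ‖ℓ (w i) (z i) - ℓ w0 (z i)‖ / Real.sqrt (L i)
          + ‖ℓ w0 (z i)‖ / Real.sqrt (L i) := add_div _ _ _
      _ ≤ Real.sqrt (D i) + ‖ℓ (z i) w0‖ / Real.sqrt (L i) := by
          gcongr
          · rw [div_le_iff₀ (hs i)]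
            exact habs
          · rw [kernel_abs_symm hpsd w0 (z i)]
  have hbound : Tendsto (fun i => Real.sqrt (D i)
      + ‖ℓ (z i) w0‖ / Real.sqrt (L i)) atTop (nhds 0) := by
    have h1 : Tendsto (fun i => Real.sqrt (D i)) atTop (nhds 0) := by
      simpa [Function.comp_def] using (Real.continuous_sqrt.tendsto 0).comp hD
    simpa using h1.add (hQ2 z hz w0)
  have hb0 : ∀ i, 0 ≤ b i := fun i => div_nonneg (norm_nonneg _) (Real.sqrt_nonneg _)
  have hb : Tendsto b atTop (nhds 0) := squeeze_zero hb0 hb_le hbound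
  have key : ∀ i, ‖ℓ (w i) (z i)‖ ^ 2 / ((ℓ (w i) (w i)).re * L i)
      = b i ^ 2 / (ℓ (w i) (w i)).re := by
    intro i
    rw [hbdef]
    rw [div_pow, Real.sq_sqrt (hL0 i).le]
    rw [div_div]
    ring_nf
  have h2 : Tendsto (fun i => b i ^ 2 / (ℓ (w i) (w i)).re) atTop (nhds 0) := by
    have := (hb.pow 2).div hww (ne_of_gt (hdiag w0))
    simpa [Pi.div_def] using this
  have h3 : Tendsto (fun i => Real.sqrt (1 - b i ^ 2 / (ℓ (w i) (w i)).re)) atTop (nhds 1) := by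
    have := (Real.continuous_sqrt.tendsto 1).comp
      (by simpa using (tendsto_const_nhds (x := (1:ℝ))).sub h2)
    simpa [Function.comp_def] using this
  convert h3 using 2 with i
  rw [key]
end

section
/- Let H be a Hilbert space and let {v_i}_{i∈ℕ} be unit vectors such that v_i → 0 weakly and such that the Gram operator [⟨v_i, v_j⟩] is bounded below on ℓ² (i.e. there is c > 0 with Σ_{i,j} a_i·conj(a_j)·⟨v_j, v_i⟩ ≥ c·Σ|a_i|² for all finitely supported scalars). Then {v_i} contains a subsequence that is a Riesz sequence: there exist constants c₁, c₂ > 0 and a subsequence {v_{n_j}} such that c₁·Σ|a_j|² ≤ ‖Σ a_j v_{n_j}‖² ≤ c₂·Σ|a_j|² for all finitely supported scalars {a_j}. -/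
open scoped ComplexInnerProductSpace

private lemma geom_quarter_sum_le (s : Finset ℕ) : ∑ i ∈ s, ((4:ℝ)⁻¹)^i ≤ 4/3 :=
  calc ∑ i ∈ s, ((4:ℝ)⁻¹)^i ≤ ∑' i : ℕ, ((4:ℝ)⁻¹)^i :=
        Summable.sum_le_tsum s (fun i _ => by positivity)
          (summable_geometric_of_lt_one (by norm_num) (by norm_num))
    _ = 4/3 := by rw [tsum_geometric_of_lt_one (by norm_num) (by norm_num)]; norm_num

private lemma norm_sq_sum_smul {H : Type*} [NormedAddCommGroup H] [InnerProductSpace ℂ H]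
    (w : ℕ → H) (a : ℕ → ℂ) (s : Finset ℕ) :
    ‖∑ j ∈ s, a j • w j‖ ^ 2 =
      (∑ i ∈ s, ∑ j ∈ s, a i * (starRingEnd ℂ) (a j) * ⟪w j, w i⟫).re := by
  have h := inner_self_eq_norm_sq (𝕜 := ℂ) (∑ j ∈ s, a j • w j)
  rw [← h, RCLike.re_to_complex]
  congr 1
  rw [sum_inner, Finset.sum_comm]
  refine Finset.sum_congr rfl fun i hi => ?_
  rw [inner_sum]
  refine Finset.sum_congr rfl fun j hj => ?_
  rw [inner_smul_left, inner_smul_right]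
  ring

/-- Unit vectors tending weakly to `0` whose Gram matrix is bounded below on `ℓ²`
contain a subsequence forming a Riesz sequence. -/
theorem riesz_subsequence_of_gram_bounded_below {H : Type*} [NormedAddCommGroup H]
    [InnerProductSpace ℂ H]
    (v : ℕ → H) (hunit : ∀ i, ‖v i‖ = 1)
    (hweak : ∀ f : H, Filter.Tendsto (fun i => ⟪v i, f⟫) Filter.atTop (nhds 0))
    (c : ℝ) (hc : 0 < c)
    (hbb : ∀ (a : ℕ → ℂ) (s : Finset ℕ),
      c * ∑ i ∈ s, ‖a i‖ ^ 2 ≤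
        (∑ i ∈ s, ∑ j ∈ s, a i * (starRingEnd ℂ) (a j) * ⟪v j, v i⟫).re) :
    ∃ m : ℕ → ℕ, StrictMono m ∧ ∃ c₁ c₂ : ℝ, 0 < c₁ ∧ 0 < c₂ ∧
      ∀ (a : ℕ → ℂ) (s : Finset ℕ),
        c₁ * ∑ j ∈ s, ‖a j‖ ^ 2 ≤ ‖∑ j ∈ s, a j • v (m j)‖ ^ 2 ∧
          ‖∑ j ∈ s, a j • v (m j)‖ ^ 2 ≤ c₂ * ∑ j ∈ s, ‖a j‖ ^ 2 := by
  classical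
  -- Step 1: construct the subsequence with rapidly decaying inner products.
  have key : ∀ (k P : ℕ), ∃ N, P < N ∧
      ∀ p ≤ P, ‖⟪v p, v N⟫‖ ≤ (2:ℝ)⁻¹ ^ (2*k+2) := by
    intro k P
    have hε : (0:ℝ) < (2:ℝ)⁻¹ ^ (2*k+2) := by positivity
    have hp : ∀ p : ℕ, ∀ᶠ N in Filter.atTop, ‖⟪v p, v N⟫‖ ≤ (2:ℝ)⁻¹ ^ (2*k+2) := by
      intro p
      have h1 : Filter.Tendsto (fun N => ‖⟪v N, v p⟫‖) Filter.atTop (nhds 0) := by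
        simpa using (hweak (v p)).norm
      have h2 := h1.eventually (eventually_le_nhds hε)
      filter_upwards [h2] with N hN
      rw [norm_inner_symm]
      exact hN
    have hall : ∀ᶠ N in Filter.atTop,
        ∀ p ∈ Finset.range (P+1), ‖⟪v p, v N⟫‖ ≤ (2:ℝ)⁻¹ ^ (2*k+2) :=
      (Filter.eventually_all_finset _).2 fun p _ => hp p
    obtain ⟨N, hN1, hN2⟩ := (hall.and (Filter.eventually_gt_atTop P)).exists
    exact ⟨N, hN2, fun p hpP => hN1 p (Finset.mem_range.2 (Nat.lt_succ_of_le hpP))⟩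
  choose F hF1 hF2 using key
  set m : ℕ → ℕ := fun k => Nat.rec 0 (fun k mk => F k mk) k with hm
  have hmsucc : ∀ k, m (k+1) = F k (m k) := fun k => rfl
  have hmono : StrictMono m := strictMono_nat_of_lt_succ fun k => by
    rw [hmsucc]; exact hF1 k (m k)
  have hinj : Function.Injective m := hmono.injective
  have hsmall : ∀ i j, i < j → ‖⟪v (m i), v (m j)⟫‖ ≤ (2:ℝ)⁻¹ ^ (i + j + 1) := by
    intro i j hij
    obtain ⟨k, rfl⟩ : ∃ k, j = k + 1 := ⟨j - 1, by omega⟩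
    have hik : i ≤ k := by omega
    have h1 : m i ≤ m k := hmono.monotone hik
    have h2 := hF2 k (m k) (m i) h1
    rw [hmsucc]
    refine h2.trans ?_
    exact pow_le_pow_of_le_one (by norm_num) (by norm_num) (by omega)
  refine ⟨m, hmono, c, 2, hc, two_pos, fun a s => ?_⟩
  constructor
  · -- lower bound via hbb on the image of s
    set b : ℕ → ℂ := fun n => a (Function.invFun m n) with hbdef
    have hb : ∀ j, b (m j) = a j := fun j => by
      simp [hbdef, Function.leftInverse_invFun hinj j]
    have h := hbb b (s.image m)
    have e1 : ∑ n ∈ s.image m, ‖b n‖ ^ 2 = ∑ j ∈ s, ‖a j‖ ^ 2 := by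
      rw [Finset.sum_image (fun x _ y _ hxy => hinj hxy)]
      exact Finset.sum_congr rfl fun j _ => by rw [hb]
    have e2 : (∑ n ∈ s.image m, ∑ n' ∈ s.image m, b n * (starRingEnd ℂ) (b n') * ⟪v n', v n⟫)
        = ∑ i ∈ s, ∑ j ∈ s, a i * (starRingEnd ℂ) (a j) * ⟪v (m j), v (m i)⟫ := by
      rw [Finset.sum_image (fun x _ y _ hxy => hinj hxy)]
      refine Finset.sum_congr rfl fun i _ => ?_
      rw [Finset.sum_image (fun x _ y _ hxy => hinj hxy)]
      exact Finset.sum_congr rfl fun j _ => by rw [hb, hb]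
    rw [e1, e2] at h
    rw [norm_sq_sum_smul]
    exact h
  · -- upper bound via the decay of inner products
    set Q : ℝ := ∑ j ∈ s, ‖a j‖ ^ 2 with hQ
    have hQ0 : 0 ≤ Q := Finset.sum_nonneg fun j _ => by positivity
    have hterm : ∀ i ∈ s, ∀ j ∈ s,
        (a i * (starRingEnd ℂ) (a j) * ⟪v (m j), v (m i)⟫).re ≤
          (if i = j then ‖a i‖ ^ 2 else 0) + ‖a i‖ * ‖a j‖ * (2:ℝ)⁻¹ ^ (i + j + 1) := by
      intro i hi j hj
      by_cases hij : i = j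
      · subst hij
        rw [if_pos rfl]
        have h1 : ⟪v (m i), v (m i)⟫ = (1 : ℂ) := by
          rw [inner_self_eq_norm_sq_to_K, hunit]; norm_num
        rw [h1, mul_one, Complex.mul_conj, Complex.ofReal_re]
        have h2 : Complex.normSq (a i) = ‖a i‖ ^ 2 := by
          rw [Complex.normSq_eq_norm_sq]
        rw [h2]
        have h3 : (0:ℝ) ≤ ‖a i‖ * ‖a i‖ * (2:ℝ)⁻¹ ^ (i + i + 1) := by positivity
        linarith
      · rw [if_neg hij, zero_add]
        have h1 : (a i * (starRingEnd ℂ) (a j) * ⟪v (m j), v (m i)⟫).re ≤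
            ‖a i * (starRingEnd ℂ) (a j) * ⟪v (m j), v (m i)⟫‖ :=
          Complex.re_le_norm _
        refine h1.trans ?_
        rw [norm_mul, norm_mul, RingHomIsometric.norm_map]
        have h2 : ‖⟪v (m j), v (m i)⟫‖ ≤ (2:ℝ)⁻¹ ^ (i + j + 1) := by
          rcases lt_or_gt_of_ne hij with h | h
          · rw [norm_inner_symm]; exact hsmall i j h
          · have := hsmall j i h
            rwa [show j + i + 1 = i + j + 1 by omega] at this
        exact mul_le_mul_of_nonneg_left h2 (by positivity)
    rw [norm_sq_sum_smul, Complex.re_sum]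
    calc ∑ i ∈ s, (∑ j ∈ s, a i * (starRingEnd ℂ) (a j) * ⟪v (m j), v (m i)⟫).re
        = ∑ i ∈ s, ∑ j ∈ s, (a i * (starRingEnd ℂ) (a j) * ⟪v (m j), v (m i)⟫).re := by
          exact Finset.sum_congr rfl fun i _ => Complex.re_sum _ _
      _ ≤ ∑ i ∈ s, ∑ j ∈ s,
            ((if i = j then ‖a i‖ ^ 2 else 0) + ‖a i‖ * ‖a j‖ * (2:ℝ)⁻¹ ^ (i + j + 1)) :=
          Finset.sum_le_sum fun i hi => Finset.sum_le_sum fun j hj => hterm i hi j hj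
      _ = Q + ∑ i ∈ s, ∑ j ∈ s, ‖a i‖ * ‖a j‖ * (2:ℝ)⁻¹ ^ (i + j + 1) := by
          simp only [Finset.sum_add_distrib]
          congr 1
          exact Finset.sum_congr rfl fun i hi => by simp [Finset.sum_ite_eq, hi]
      _ ≤ Q + Q := by
          have hS0 : (0:ℝ) ≤ ∑ i ∈ s, ‖a i‖ * (2:ℝ)⁻¹ ^ i :=
            Finset.sum_nonneg fun i _ => by positivity
          have e : ∑ i ∈ s, ∑ j ∈ s, ‖a i‖ * ‖a j‖ * (2:ℝ)⁻¹ ^ (i + j + 1)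
              = 2⁻¹ * ((∑ i ∈ s, ‖a i‖ * (2:ℝ)⁻¹ ^ i) * (∑ j ∈ s, ‖a j‖ * (2:ℝ)⁻¹ ^ j)) := by
            rw [Finset.sum_mul_sum, Finset.mul_sum]
            refine Finset.sum_congr rfl fun i _ => ?_
            rw [Finset.mul_sum]
            refine Finset.sum_congr rfl fun j _ => ?_
            rw [pow_succ, pow_add]
            ring
          have hCS : (∑ i ∈ s, ‖a i‖ * (2:ℝ)⁻¹ ^ i) ^ 2 ≤ Q * ∑ i ∈ s, ((4:ℝ)⁻¹) ^ i := by
            have h := Finset.sum_mul_sq_le_sq_mul_sq s (fun i => ‖a i‖) (fun i => (2:ℝ)⁻¹ ^ i)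
            have h4 : ∀ i : ℕ, (((2:ℝ)⁻¹) ^ i) ^ 2 = ((4:ℝ)⁻¹) ^ i := fun i => by
              rw [← pow_mul, mul_comm, pow_mul]; norm_num
            refine h.trans_eq ?_
            congr 1
            exact Finset.sum_congr rfl fun i _ => h4 i
          have hgeo := geom_quarter_sum_le s
          rw [e]
          nlinarith [hS0, hCS, hgeo, hQ0, sq_nonneg (∑ i ∈ s, ‖a i‖ * (2:ℝ)⁻¹ ^ i)]
      _ = 2 * Q := by ring
end

section
/- Let H be a Hilbert space and let {v_i} be unit vectors such that (a) there is c > 0 with Σ_{k} a_k conj(a_r) ⟨v_r, v_k⟩ ≥ c Σ|a_k|² for all scalars supported on any single 'block' of fixed finite size n, and (b) ⟨v_i, v_j⟩ → 0 as max(i,j) → ∞ with i ≠ j running over distinct blocks. Then one can extract an infinite subcollection of blocks whose union of vectors has Gram matrix bounded below by c/2 on ℓ². -/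
open scoped ComplexInnerProductSpace

/-- Block extraction: unit vectors `v j k` arranged in blocks of size `n` whose Gram
matrix is bounded below by `c` on each block, and whose inter-block inner products
become arbitrarily small, admit an infinite subcollection of blocks whose union has
Gram matrix bounded below by `c/2` on `ℓ²`. -/
theorem block_gram_bounded_below_extraction {H : Type*} [NormedAddCommGroup H]
    [InnerProductSpace ℂ H]
    (n : ℕ) (v : ℕ → Fin n → H) (hunit : ∀ j k, ‖v j k‖ = 1)
    (c : ℝ) (hc : 0 < c)
    (ha : ∀ (j : ℕ) (a : Fin n → ℂ),
      c * ∑ k, ‖a k‖ ^ 2 ≤ ‖∑ k, a k • v j k‖ ^ 2)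
    (hb : ∀ (N : ℕ) (ε : ℝ), 0 < ε → ∃ m, N ≤ m ∧
      ∀ i ≤ N, ∀ k r : Fin n, ‖⟪v m r, v i k⟫‖ < ε) :
    ∃ m : ℕ → ℕ, StrictMono m ∧
      ∀ (ρ : ℕ) (a : ℕ → Fin n → ℂ),
        (c / 2) * ∑ i ∈ Finset.range ρ, ∑ k, ‖a i k‖ ^ 2 ≤
          ‖∑ i ∈ Finset.range ρ, ∑ k, a i k • v (m i) k‖ ^ 2 := by
  classical
  set δ : ℕ → ℝ := fun j => c / ((n + 1) * (j + 1) * 2 ^ (j + 3)) with hδdef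
  have hδpos : ∀ j, 0 < δ j := fun j => by
    apply div_pos hc; positivity
  choose f hf1 hf2 using hb
  let m : ℕ → ℕ := fun j => Nat.rec 0 (fun j mj => f (mj + 1) (δ (j + 1)) (hδpos (j + 1))) j
  have hmsucc : ∀ j, m (j + 1) = f (m j + 1) (δ (j + 1)) (hδpos (j + 1)) := fun _ => rfl
  have hmono : StrictMono m := strictMono_nat_of_lt_succ fun j => by
    have h := hf1 (m j + 1) (δ (j + 1)) (hδpos (j + 1))
    rw [hmsucc]; omega
  have hsmall : ∀ i j, i < j → ∀ k r : Fin n, ‖⟪v (m j) r, v (m i) k⟫‖ < δ j := by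
    intro i j hij k r
    obtain ⟨j', rfl⟩ : ∃ j', j = j' + 1 := ⟨j - 1, by omega⟩
    rw [hmsucc]
    exact hf2 (m j' + 1) (δ (j' + 1)) (hδpos (j' + 1)) (m i)
      (le_trans (hmono.monotone (Nat.lt_succ_iff.mp hij)) (Nat.le_succ _)) k r
  refine ⟨m, hmono, ?_⟩
  intro ρ a
  -- notation
  set x : ℕ → H := fun i => ∑ k, a i k • v (m i) k with hx
  set S : ℕ → ℝ := fun i => ∑ k, ‖a i k‖ ^ 2 with hS
  have hSnn : ∀ i, 0 ≤ S i := fun i => Finset.sum_nonneg fun k _ => sq_nonneg _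
  -- bound on inter-block inner products, both directions
  have hvb : ∀ i j, i ≠ j → ∀ k r : Fin n,
      ‖⟪v (m i) k, v (m j) r⟫‖ ≤ δ (max i j) := by
    intro i j hij k r
    rcases lt_or_gt_of_ne hij with h | h
    · rw [max_eq_right h.le, ← inner_conj_symm, RCLike.norm_conj]
      exact (hsmall i j h k r).le
    · rw [max_eq_left h.le]
      exact (hsmall j i h r k).le
  -- norm bound on the off-diagonal Gram entries
  have hoff : ∀ i j, i ≠ j →
      ‖⟪x i, x j⟫‖ ≤ δ (max i j) * ((n * S i + n * S j) / 2) := by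
    intro i j hij
    have hinner : ⟪x i, x j⟫
        = ∑ k, ∑ r, (starRingEnd ℂ) (a i k) * (a j r * ⟪v (m i) k, v (m j) r⟫) := by
      rw [hx, sum_inner]
      exact Finset.sum_congr rfl fun k _ => by
        rw [inner_smul_left, inner_sum, Finset.mul_sum]
        exact Finset.sum_congr rfl fun r _ => by rw [inner_smul_right]
    calc ‖⟪x i, x j⟫‖
        ≤ ∑ k, ∑ r, δ (max i j) * ((‖a i k‖ ^ 2 + ‖a j r‖ ^ 2) / 2) := by
          rw [hinner]
          refine (norm_sum_le _ _).trans (Finset.sum_le_sum fun k _ => ?_)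
          refine (norm_sum_le _ _).trans (Finset.sum_le_sum fun r _ => ?_)
          have h1 : ‖(starRingEnd ℂ) (a i k) * (a j r * ⟪v (m i) k, v (m j) r⟫)‖
              = ‖a i k‖ * ‖a j r‖ * ‖⟪v (m i) k, v (m j) r⟫‖ := by
            rw [norm_mul, norm_mul, RCLike.norm_conj]; ring
          rw [h1]
          have h2 : ‖a i k‖ * ‖a j r‖ ≤ (‖a i k‖ ^ 2 + ‖a j r‖ ^ 2) / 2 := by
            nlinarith [sq_nonneg (‖a i k‖ - ‖a j r‖)]
          have h3 := hvb i j hij k r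
          have h4 : (0:ℝ) ≤ ‖a i k‖ * ‖a j r‖ := by positivity
          calc ‖a i k‖ * ‖a j r‖ * ‖⟪v (m i) k, v (m j) r⟫‖
              ≤ ((‖a i k‖ ^ 2 + ‖a j r‖ ^ 2) / 2) * δ (max i j) := by
                apply mul_le_mul h2 h3 (norm_nonneg _) (by positivity)
            _ = δ (max i j) * ((‖a i k‖ ^ 2 + ‖a j r‖ ^ 2) / 2) := by ring
      _ = δ (max i j) * ((n * S i + n * S j) / 2) := by
          simp only [← Finset.mul_sum, Finset.sum_div, ← Finset.sum_add_distrib]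
          congr 1
          have e1 : ∑ k : Fin n, ∑ r : Fin n, (‖a i k‖ ^ 2 + ‖a j r‖ ^ 2)
              = (n : ℝ) * S i + n * S j := by
            simp [Finset.sum_add_distrib, Finset.sum_const, Finset.card_univ, hS,
              Finset.mul_sum, mul_comm]
          calc ∑ k : Fin n, ∑ r : Fin n, ((‖a i k‖ ^ 2 + ‖a j r‖ ^ 2) / 2)
              = (∑ k : Fin n, ∑ r : Fin n, (‖a i k‖ ^ 2 + ‖a j r‖ ^ 2)) / 2 := by
                simp [Finset.sum_div]
            _ = (n * S i + n * S j) / 2 := by rw [e1]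
  -- real part lower bound for off-diagonal terms
  have hoffre : ∀ i j, i ≠ j →
      -(δ (max i j) * ((n * S i + n * S j) / 2)) ≤ (⟪x i, x j⟫).re := by
    intro i j hij
    have h1 : |(⟪x i, x j⟫).re| ≤ ‖⟪x i, x j⟫‖ := by
      exact Complex.abs_re_le_norm _
    have := hoff i j hij
    cases' abs_le.mp h1 with h2 _
    linarith
  -- expansion of the squared norm
  have hexp : ‖∑ i ∈ Finset.range ρ, x i‖ ^ 2
      = ∑ i ∈ Finset.range ρ, ∑ j ∈ Finset.range ρ, (⟪x i, x j⟫).re := by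
    rw [InnerProductSpace.norm_sq_eq_re_inner (𝕜 := ℂ), sum_inner, RCLike.re_to_complex, Complex.re_sum]
    exact Finset.sum_congr rfl fun i _ => by rw [inner_sum, Complex.re_sum]
  have hdiag : ∀ i, c * S i ≤ (⟪x i, x i⟫).re := fun i => by
    have h := ha (m i) (a i)
    rw [InnerProductSpace.norm_sq_eq_re_inner (𝕜 := ℂ), RCLike.re_to_complex] at h
    exact h
  -- the tail sums
  set Δ : ℝ := ∑ j ∈ Finset.range ρ, δ j with hΔ
  set E : ℕ → ℝ := fun i => ∑ j ∈ (Finset.range ρ).erase i, δ (max i j) with hE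
  have hEle : ∀ i, E i ≤ (i : ℝ) * δ i + Δ := by
    intro i
    have step1 : E i ≤ ∑ j ∈ (Finset.range ρ).erase i,
        ((if j < i then δ i else 0) + δ j) := by
      refine Finset.sum_le_sum fun j hj => ?_
      have hji : j ≠ i := Finset.ne_of_mem_erase hj
      rcases lt_or_gt_of_ne hji with h | h
      · rw [max_eq_left h.le, if_pos h]
        have := (hδpos j).le; linarith
      · rw [max_eq_right h.le, if_neg (by omega)]
        simp
    have step2 : ∑ j ∈ (Finset.range ρ).erase i, (if j < i then δ i else 0)
        ≤ (i : ℝ) * δ i := by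
      rw [← Finset.sum_filter]
      have hsub : ((Finset.range ρ).erase i).filter (· < i) ⊆ Finset.range i := by
        intro j hj
        simp only [Finset.mem_filter, Finset.mem_erase, Finset.mem_range] at hj ⊢
        omega
      calc ∑ _j ∈ ((Finset.range ρ).erase i).filter (· < i), δ i
          ≤ ∑ _j ∈ Finset.range i, δ i :=
            Finset.sum_le_sum_of_subset_of_nonneg hsub fun _ _ _ => (hδpos i).le
        _ = (i : ℝ) * δ i := by
            rw [Finset.sum_const, Finset.card_range, nsmul_eq_mul]
    have step3 : ∑ j ∈ (Finset.range ρ).erase i, δ j ≤ Δ :=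
      Finset.sum_le_sum_of_subset_of_nonneg (Finset.erase_subset _ _)
        fun j _ _ => (hδpos j).le
    calc E i ≤ ∑ j ∈ (Finset.range ρ).erase i, ((if j < i then δ i else 0) + δ j) := step1
      _ = (∑ j ∈ (Finset.range ρ).erase i, (if j < i then δ i else 0))
          + ∑ j ∈ (Finset.range ρ).erase i, δ j := Finset.sum_add_distrib
      _ ≤ (i : ℝ) * δ i + Δ := add_le_add step2 step3
  -- numeric bound: n * ((i:ℝ) * δ i + Δ) ≤ c / 2
  have hδle : ∀ j w : ℕ, w ≤ j + 1 → (n : ℝ) * ((w : ℝ) * δ j) ≤ c / 2 ^ (j + 3) := by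
    intro j w hw
    have h1 : (n : ℝ) * ((w : ℝ) * δ j) ≤ ((n : ℝ) + 1) * (((j : ℝ) + 1) * δ j) := by
      have hn : (n : ℝ) ≤ (n : ℝ) + 1 := by linarith
      have hww : (w : ℝ) ≤ (j : ℝ) + 1 := by exact_mod_cast hw
      have hd := (hδpos j).le
      have hnw : (n : ℝ) * (w : ℝ) ≤ ((n : ℝ) + 1) * ((j : ℝ) + 1) :=
        mul_le_mul hn hww (Nat.cast_nonneg w) (by positivity)
      calc (n : ℝ) * ((w : ℝ) * δ j) = ((n : ℝ) * (w : ℝ)) * δ j := by ring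
        _ ≤ (((n : ℝ) + 1) * ((j : ℝ) + 1)) * δ j :=
            mul_le_mul_of_nonneg_right hnw hd
        _ = ((n : ℝ) + 1) * (((j : ℝ) + 1) * δ j) := by ring
    have h2 : ((n : ℝ) + 1) * (((j : ℝ) + 1) * δ j) = c / 2 ^ (j + 3) := by
      rw [hδdef]
      field_simp
    linarith
  have hΔle : (n : ℝ) * Δ ≤ c / 4 := by
    have h1 : (n : ℝ) * Δ = ∑ j ∈ Finset.range ρ, (n : ℝ) * ((1 : ℝ) * δ j) := by
      rw [hΔ, Finset.mul_sum]; simp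
    have h2 : ∑ j ∈ Finset.range ρ, (n : ℝ) * ((1 : ℝ) * δ j)
        ≤ ∑ j ∈ Finset.range ρ, c / 2 ^ (j + 3) := by
      refine Finset.sum_le_sum fun j _ => ?_
      have := hδle j 1 (by omega)
      simpa using this
    have h3 : ∑ j ∈ Finset.range ρ, c / 2 ^ (j + 3)
        = (c / 8) * ∑ j ∈ Finset.range ρ, (1 / 2 : ℝ) ^ j := by
      rw [Finset.mul_sum]
      refine Finset.sum_congr rfl fun j _ => ?_
      rw [div_pow, one_pow, pow_add]
      ring
    have h4 : ∑ j ∈ Finset.range ρ, (1 / 2 : ℝ) ^ j ≤ 2 := by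
      have := geom_sum_eq (by norm_num : (1 / 2 : ℝ) ≠ 1) ρ
      rw [this]
      have hp : (0:ℝ) ≤ (1/2:ℝ) ^ ρ := by positivity
      rw [div_le_iff_of_neg (by norm_num : (1/2:ℝ) - 1 < 0)]
      linarith
    have h5 : (c / 8) * ∑ j ∈ Finset.range ρ, (1 / 2 : ℝ) ^ j ≤ (c / 8) * 2 := by
      apply mul_le_mul_of_nonneg_left h4 (by linarith)
    linarith
  have hcoef : ∀ i : ℕ, (n : ℝ) * ((i : ℝ) * δ i + Δ) ≤ c / 2 := by
    intro i
    have h1 := hδle i i (by omega)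
    have h2 : c / 2 ^ (i + 3) ≤ c / 8 := by
      apply div_le_div_of_nonneg_left hc.le (by norm_num)
      calc (8:ℝ) = 2 ^ 3 := by norm_num
        _ ≤ 2 ^ (i + 3) := pow_le_pow_right₀ (by norm_num) (by omega)
    have := hΔle
    nlinarith
  -- the swap identity
  have hswap : ∀ g : ℕ → ℕ → ℝ,
      ∑ i ∈ Finset.range ρ, ∑ j ∈ (Finset.range ρ).erase i, g i j
        = ∑ j ∈ Finset.range ρ, ∑ i ∈ (Finset.range ρ).erase j, g i j := by
    intro g
    have key : ∀ s : Finset ℕ, ∑ i ∈ s, ∑ j ∈ s.erase i, g i j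
        = ∑ j ∈ s, ∑ i ∈ s.erase j, g i j := by
      intro s
      have h1 : ∀ i : ℕ, s.erase i = s.filter (· ≠ i) := fun i =>
        (Finset.filter_ne' s i).symm
      simp only [h1, Finset.sum_filter]
      rw [Finset.sum_comm]
      refine Finset.sum_congr rfl fun j _ => Finset.sum_congr rfl fun i _ => ?_
      simp only [ne_eq]
      by_cases h : i = j
      · subst h; simp
      · rw [if_pos h, if_pos (Ne.symm h)]
    exact key _
  -- put everything together
  rw [hexp]
  have hsplit : ∑ i ∈ Finset.range ρ, ∑ j ∈ Finset.range ρ, (⟪x i, x j⟫).re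
      = ∑ i ∈ Finset.range ρ, ((⟪x i, x i⟫).re
        + ∑ j ∈ (Finset.range ρ).erase i, (⟪x i, x j⟫).re) := by
    exact Finset.sum_congr rfl fun i hi => (Finset.add_sum_erase _ _ hi).symm
  rw [hsplit]
  have hlower : ∀ i ∈ Finset.range ρ,
      c * S i - ∑ j ∈ (Finset.range ρ).erase i, δ (max i j) * ((n * S i + n * S j) / 2)
        ≤ (⟪x i, x i⟫).re + ∑ j ∈ (Finset.range ρ).erase i, (⟪x i, x j⟫).re := by
    intro i _
    have h1 : -∑ j ∈ (Finset.range ρ).erase i, δ (max i j) * ((n * S i + n * S j) / 2)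
        ≤ ∑ j ∈ (Finset.range ρ).erase i, (⟪x i, x j⟫).re := by
      rw [← Finset.sum_neg_distrib]
      exact Finset.sum_le_sum fun j hj => hoffre i j (Finset.ne_of_mem_erase hj).symm
    have h2 := hdiag i
    linarith
  have hmain : ∑ i ∈ Finset.range ρ, (c * S i
        - ∑ j ∈ (Finset.range ρ).erase i, δ (max i j) * ((n * S i + n * S j) / 2))
      ≤ ∑ i ∈ Finset.range ρ, ((⟪x i, x i⟫).re
        + ∑ j ∈ (Finset.range ρ).erase i, (⟪x i, x j⟫).re) :=
    Finset.sum_le_sum hlower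
  -- bound the subtracted cross terms
  have hcross : ∑ i ∈ Finset.range ρ,
      ∑ j ∈ (Finset.range ρ).erase i, δ (max i j) * ((n * S i + n * S j) / 2)
      ≤ (c / 2) * ∑ i ∈ Finset.range ρ, S i := by
    have hsplit2 : ∀ i j : ℕ, δ (max i j) * ((n * S i + n * S j) / 2)
        = δ (max i j) * (n * S i) / 2 + δ (max i j) * (n * S j) / 2 := fun i j => by ring
    have e0 : ∑ i ∈ Finset.range ρ,
        ∑ j ∈ (Finset.range ρ).erase i, δ (max i j) * ((n * S i + n * S j) / 2)
        = (∑ i ∈ Finset.range ρ, ∑ j ∈ (Finset.range ρ).erase i,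
            δ (max i j) * (n * S i) / 2)
          + ∑ i ∈ Finset.range ρ, ∑ j ∈ (Finset.range ρ).erase i,
            δ (max i j) * (n * S j) / 2 := by
      rw [← Finset.sum_add_distrib]
      refine Finset.sum_congr rfl fun i _ => ?_
      rw [← Finset.sum_add_distrib]
      exact Finset.sum_congr rfl fun j _ => hsplit2 i j
    have e1 : ∑ i ∈ Finset.range ρ, ∑ j ∈ (Finset.range ρ).erase i,
          δ (max i j) * (n * S i) / 2
        = ∑ i ∈ Finset.range ρ, (n * S i / 2) * E i := by
      refine Finset.sum_congr rfl fun i _ => ?_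
      simp only [hE]
      rw [Finset.mul_sum ((Finset.range ρ).erase i) (fun j => δ (max i j)) (n * S i / 2)]
      exact Finset.sum_congr rfl fun j _ => by ring
    have e2 : ∑ i ∈ Finset.range ρ, ∑ j ∈ (Finset.range ρ).erase i,
          δ (max i j) * (n * S j) / 2
        = ∑ i ∈ Finset.range ρ, (n * S i / 2) * E i := by
      rw [hswap fun i j => δ (max i j) * (n * S j) / 2]
      refine Finset.sum_congr rfl fun j _ => ?_
      simp only [hE]
      rw [Finset.mul_sum ((Finset.range ρ).erase j) (fun i => δ (max j i)) (n * S j / 2)]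
      exact Finset.sum_congr rfl fun i _ => by rw [max_comm i j]; ring
    rw [e0, e1, e2, ← two_mul]
    have e3 : ∀ i ∈ Finset.range ρ, 2 * ((n * S i / 2) * E i) ≤ (c / 2) * S i := by
      intro i _
      have hE1 := hEle i
      have hE2 := hcoef i
      have hEnn : 0 ≤ E i := Finset.sum_nonneg fun j _ => (hδpos _).le
      have hs := hSnn i
      calc 2 * ((n * S i / 2) * E i) = ((n : ℝ) * S i) * E i := by ring
        _ ≤ ((n : ℝ) * S i) * ((i : ℝ) * δ i + Δ) :=
            mul_le_mul_of_nonneg_left hE1 (by positivity)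
        _ = S i * ((n : ℝ) * ((i : ℝ) * δ i + Δ)) := by ring
        _ ≤ S i * (c / 2) := mul_le_mul_of_nonneg_left hE2 hs
        _ = (c / 2) * S i := by ring
    calc 2 * ∑ i ∈ Finset.range ρ, (n * S i / 2) * E i
        = ∑ i ∈ Finset.range ρ, 2 * ((n * S i / 2) * E i) := by rw [Finset.mul_sum]
      _ ≤ ∑ i ∈ Finset.range ρ, (c / 2) * S i := Finset.sum_le_sum e3
      _ = (c / 2) * ∑ i ∈ Finset.range ρ, S i := by rw [Finset.mul_sum]
  have hfin : ∑ i ∈ Finset.range ρ, (c * S i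
        - ∑ j ∈ (Finset.range ρ).erase i, δ (max i j) * ((n * S i + n * S j) / 2))
      = c * ∑ i ∈ Finset.range ρ, S i
        - ∑ i ∈ Finset.range ρ, ∑ j ∈ (Finset.range ρ).erase i,
            δ (max i j) * ((n * S i + n * S j) / 2) := by
    rw [Finset.sum_sub_distrib, Finset.mul_sum]
  have hT : (c / 2) * ∑ i ∈ Finset.range ρ, S i
      ≤ c * (∑ i ∈ Finset.range ρ, S i)
        - ∑ i ∈ Finset.range ρ, ∑ j ∈ (Finset.range ρ).erase i,
            δ (max i j) * ((n * S i + n * S j) / 2) := by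
    have := hcross; linarith
  calc (c / 2) * ∑ i ∈ Finset.range ρ, S i
      ≤ c * (∑ i ∈ Finset.range ρ, S i)
        - ∑ i ∈ Finset.range ρ, ∑ j ∈ (Finset.range ρ).erase i,
            δ (max i j) * ((n * S i + n * S j) / 2) := hT
    _ = ∑ i ∈ Finset.range ρ, (c * S i
        - ∑ j ∈ (Finset.range ρ).erase i, δ (max i j) * ((n * S i + n * S j) / 2)) :=
        hfin.symm
    _ ≤ _ := hmain
end

section
/- Let n ≥ 2 and let v₁, …, vₙ₊₁ ∈ ℂⁿ be vectors with the property that every n of them are linearly independent (so the full set of n+1 vectors is linearly dependent). Then there exists ε > 0 such that for every subset {ν₁,…,νₙ} ⊆ {1,…,n+1} of size n, the matrix [(1 − w_j·conj(w_i))·⟨v_{ν_j}, v_{ν_i}⟩]_{1≤i,j≤n} is positive semi-definite, where w₁ = ε and w₂ = … = wₙ = 0; but no ε > 0 makes the corresponding (n+1)×(n+1) matrix over the full set positive semi-definite. -/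
open scoped ComplexInnerProductSpace ComplexOrder

open Matrix in
lemma quad_eq' {n N : ℕ} (u : Fin N → EuclideanSpace ℂ (Fin n)) (w x : Fin N → ℂ) :
    dotProduct (star x)
      ((Matrix.of fun i j => (1 - w j * (starRingEnd ℂ) (w i)) * ⟪u i, u j⟫) *ᵥ x) =
    ⟪∑ i, x i • u i, ∑ i, x i • u i⟫ - ⟪∑ i, (w i * x i) • u i, ∑ i, (w i * x i) • u i⟫ := by
  simp only [dotProduct, Matrix.mulVec, Matrix.of_apply, Pi.star_apply,
    Complex.star_def, sum_inner, inner_sum, inner_smul_left, inner_smul_right, _root_.map_mul,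
    Finset.mul_sum, ← Finset.sum_sub_distrib]
  rw [Finset.sum_comm]
  refine Finset.sum_congr rfl fun i _ => Finset.sum_congr rfl fun j _ => ?_
  ring

open Matrix in
lemma herm' {n N : ℕ} (u : Fin N → EuclideanSpace ℂ (Fin n)) (w : Fin N → ℂ) :
    (Matrix.of fun i j => (1 - w j * (starRingEnd ℂ) (w i)) * ⟪u i, u j⟫).IsHermitian := by
  show _ᴴ = _
  ext i j
  simp only [Matrix.conjTranspose_apply, Matrix.of_apply, RCLike.star_def, map_sub,
    _root_.map_mul, _root_.map_one, Complex.conj_conj, inner_conj_symm]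
  ring

lemma single_sum' {n N : ℕ} (u : Fin N → EuclideanSpace ℂ (Fin n)) (x : Fin N → ℂ) (c : ℂ)
    (i₀ : Fin N) :
    ∑ i, ((if i = i₀ then c else 0) * x i) • u i = (c * x i₀) • u i₀ := by
  rw [Finset.sum_eq_single i₀] <;> simp +contextual

lemma norm_bound' {n : ℕ} [Nonempty (Fin n)] (u : Fin n → EuclideanSpace ℂ (Fin n))
    (hu : LinearIndependent ℂ u) :
    ∃ C : ℝ, 0 < C ∧ ∀ x : Fin n → ℂ, ‖x‖ ≤ C * ‖∑ i, x i • u i‖ := by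
  have hcard : Fintype.card (Fin n) = Module.finrank ℂ (EuclideanSpace ℂ (Fin n)) := by simp
  let b : Module.Basis (Fin n) ℂ (EuclideanSpace ℂ (Fin n)) :=
    basisOfLinearIndependentOfCardEqFinrank hu hcard
  let T : EuclideanSpace ℂ (Fin n) →L[ℂ] (Fin n → ℂ) :=
    LinearMap.toContinuousLinearMap b.equivFun.toLinearMap
  refine ⟨‖T‖ + 1, by positivity, fun x => ?_⟩
  have h1 : b.equivFun.symm x = ∑ i, x i • u i := by
    rw [Module.Basis.equivFun_symm_apply]
    refine Finset.sum_congr rfl fun i _ => ?_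
    congr 1
    show b i = u i
    rw [coe_basisOfLinearIndependentOfCardEqFinrank]
  have h2 : x = T (∑ i, x i • u i) := by
    have h3 : T (∑ i, x i • u i) = b.equivFun (∑ i, x i • u i) := rfl
    rw [h3, ← h1, LinearEquiv.apply_symm_apply]
  calc ‖x‖ = ‖T (∑ i, x i • u i)‖ := by rw [← h2]
  _ ≤ ‖T‖ * ‖∑ i, x i • u i‖ := T.le_opNorm _
  _ ≤ (‖T‖ + 1) * ‖∑ i, x i • u i‖ := by
      have := norm_nonneg (∑ i, x i • u i); nlinarith

set_option maxHeartbeats 1000000 in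
/-- Let `v₁, …, v_{n+1} ∈ ℂⁿ` (`n ≥ 2`) be such that every `n` of them are linearly
independent. Then there is `ε > 0` such that for every `n`-point subset the matrix
`[(1 − w_j conj(w_i)) ⟨v_{ν_i}, v_{ν_j}⟩]` with `w₁ = ε`, `w₂ = … = wₙ = 0` is positive
semi-definite; but no `ε > 0` makes the corresponding `(n+1)×(n+1)` matrix over the
full set positive semi-definite. -/
theorem weak_separation_counterexample (n : ℕ) (hn : 2 ≤ n)
    (v : Fin (n + 1) → EuclideanSpace ℂ (Fin n))
    (hli : ∀ i : Fin (n + 1),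
      LinearIndependent ℂ (fun j : {j : Fin (n + 1) // j ≠ i} => v j)) :
    (∃ ε : ℝ, 0 < ε ∧ ∀ ν : Fin n → Fin (n + 1), Function.Injective ν →
      (Matrix.of fun i j : Fin n =>
        (1 - (if j = (⟨0, by omega⟩ : Fin n) then (ε : ℂ) else 0) *
            (starRingEnd ℂ) (if i = (⟨0, by omega⟩ : Fin n) then (ε : ℂ) else 0)) *
          ⟪v (ν i), v (ν j)⟫).PosSemidef) ∧
    ¬ ∃ ε : ℝ, 0 < ε ∧
      (Matrix.of fun i j : Fin (n + 1) =>
        (1 - (if j = (0 : Fin (n + 1)) then (ε : ℂ) else 0) *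
            (starRingEnd ℂ) (if i = (0 : Fin (n + 1)) then (ε : ℂ) else 0)) *
          ⟪v i, v j⟫).PosSemidef := by
  classical
  haveI : Nonempty (Fin n) := ⟨⟨0, by omega⟩⟩
  constructor
  · -- Part 1
    have key : ∀ ν : Fin n → Fin (n + 1), Function.Injective ν → ∃ δ : ℝ, 0 < δ ∧
        ∀ ε : ℝ, 0 < ε → ε ≤ δ →
        (Matrix.of fun i j : Fin n =>
          (1 - (if j = (⟨0, by omega⟩ : Fin n) then (ε : ℂ) else 0) *
              (starRingEnd ℂ) (if i = (⟨0, by omega⟩ : Fin n) then (ε : ℂ) else 0)) *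
            ⟪v (ν i), v (ν j)⟫).PosSemidef := by
      intro ν hν
      obtain ⟨m, hm⟩ : ∃ m : Fin (n + 1), ∀ i, ν i ≠ m := by
        by_contra h
        push_neg at h
        have hsurj : Function.Surjective ν := fun m => h m
        have := Fintype.card_le_of_surjective ν hsurj
        simp at this
      have hLI : LinearIndependent ℂ (fun i : Fin n => v (ν i)) := by
        have hinj2 : Function.Injective
            (fun i : Fin n => (⟨ν i, hm i⟩ : {j : Fin (n + 1) // j ≠ m})) := by
          intro a b hab
          exact hν (congrArg Subtype.val hab)
        exact (hli m).comp _ hinj2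
      obtain ⟨C, hC, hbound⟩ := norm_bound' (fun i => v (ν i)) hLI
      set i₀ : Fin n := ⟨0, by omega⟩ with hi₀
      set u0 : EuclideanSpace ℂ (Fin n) := v (ν i₀) with hu0
      refine ⟨1 / (C * (‖u0‖ + 1)), by positivity, fun ε hε hεδ => ?_⟩
      refine Matrix.PosSemidef.of_dotProduct_mulVec_nonneg (herm' (fun i => v (ν i)) _) fun x => ?_
      rw [quad_eq' (fun i => v (ν i)) (fun i => if i = i₀ then (ε : ℂ) else 0) x, single_sum']
      set y : EuclideanSpace ℂ (Fin n) := ∑ i, x i • v (ν i) with hy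
      set z : EuclideanSpace ℂ (Fin n) := ((ε : ℂ) * x i₀) • u0 with hz
      have hxb : ‖x i₀‖ ≤ C * ‖y‖ := by
        calc ‖x i₀‖ ≤ ‖x‖ := norm_le_pi_norm x _
        _ ≤ C * ‖y‖ := hbound x
      have hεC : ε * (C * (‖u0‖ + 1)) ≤ 1 := by
        rw [le_div_iff₀ (by positivity)] at hεδ
        linarith
      have hzy : ‖z‖ ≤ ‖y‖ := by
        have hz' : ‖z‖ = ε * (‖x i₀‖ * ‖u0‖) := by
          rw [hz, norm_smul, norm_mul, Complex.norm_real, Real.norm_eq_abs, abs_of_pos hε,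
            mul_assoc]
        have hu : (0:ℝ) ≤ ‖u0‖ := norm_nonneg _
        have hyn : (0:ℝ) ≤ ‖y‖ := norm_nonneg _
        have hxn : (0:ℝ) ≤ ‖x i₀‖ := norm_nonneg _
        rw [hz']
        nlinarith [mul_le_mul_of_nonneg_left hxb (le_of_lt hε)]
      rw [inner_self_eq_norm_sq_to_K, inner_self_eq_norm_sq_to_K, sub_nonneg]
      have hsq : ‖z‖ ^ 2 ≤ ‖y‖ ^ 2 := by nlinarith [norm_nonneg z]
      exact_mod_cast hsq
    choose δf hδpos hδ using key
    haveI : Nonempty {ν : Fin n → Fin (n + 1) // Function.Injective ν} :=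
      ⟨⟨Fin.castLE (by omega), Fin.castLE_injective _⟩⟩
    have hS : (Finset.univ : Finset {ν : Fin n → Fin (n + 1) // Function.Injective ν}).Nonempty :=
      Finset.univ_nonempty
    refine ⟨Finset.univ.inf' hS (fun p => δf p.1 p.2), ?_, fun ν hν => ?_⟩
    · rw [Finset.lt_inf'_iff]
      exact fun p _ => hδpos p.1 p.2
    · refine hδ ν hν _ ?_ (Finset.inf'_le _ (Finset.mem_univ (⟨ν, hν⟩ : {ν : Fin n → Fin (n + 1) // Function.Injective ν})))
      rw [Finset.lt_inf'_iff]
      exact fun p _ => hδpos p.1 p.2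
  · -- Part 2
    rintro ⟨ε, hε, hH, hQ⟩
    have hnotLI : ¬ LinearIndependent ℂ v := by
      intro h
      have := h.fintype_card_le_finrank
      simp at this
    obtain ⟨g, hg0, i, hgi⟩ := Fintype.not_linearIndependent_iff.mp hnotLI
    have hgz : g 0 ≠ 0 := by
      intro h0
      have hsum : ∑ j : {j : Fin (n + 1) // j ≠ 0}, g j • v j = 0 := by
        rw [← Finset.sum_subtype (Finset.univ.erase 0)
          (fun x => by simp [Finset.mem_erase]) (fun j => g j • v j)]
        have h5 := Finset.sum_erase_add Finset.univ (fun j => g j • v j) (Finset.mem_univ 0)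
        rw [hg0] at h5
        simp only [h0, zero_smul, add_zero] at h5
        exact h5
      have hres := Fintype.linearIndependent_iff.mp (hli 0) (fun j => g j) hsum
      rcases eq_or_ne i 0 with h | h
      · exact hgi (h ▸ h0)
      · exact hgi (hres ⟨i, h⟩)
    have hv0 : v 0 ≠ 0 := by
      have h01 : (0 : Fin (n + 1)) ≠ ⟨1, by omega⟩ := by simp [Fin.ext_iff]
      exact (hli ⟨1, by omega⟩).ne_zero ⟨0, h01⟩
    have hQg := Matrix.PosSemidef.dotProduct_mulVec_nonneg ⟨hH, hQ⟩ g
    rw [quad_eq' v (fun i => if i = (0 : Fin (n + 1)) then (ε : ℂ) else 0) g,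
      single_sum', hg0, inner_self_eq_norm_sq_to_K, inner_self_eq_norm_sq_to_K] at hQg
    set z : EuclideanSpace ℂ (Fin n) := ((ε : ℂ) * g 0) • v 0 with hzdef
    have hzpos : 0 < ‖z‖ := by
      have hne : (ε : ℂ) * g 0 ≠ 0 := by
        apply mul_ne_zero _ hgz
        simpa using ne_of_gt hε
      rw [hzdef]
      exact norm_pos_iff.2 (smul_ne_zero hne hv0)
    rw [sub_nonneg] at hQg
    have hle : ‖z‖ ^ 2 ≤ ‖(0 : EuclideanSpace ℂ (Fin n))‖ ^ 2 := by exact_mod_cast hQg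
    simp only [norm_zero] at hle
    nlinarith
end

section
/- Let A be a positive semi-definite (n+1)×(n+1) Hermitian matrix with unit diagonal, and suppose there exists ε > 0 such that the matrix [(1 − w_j·conj(w_i))·A_{ij}] is positive semi-definite, where w₁ = ε and w₂ = … = w_{n+1} = 0. If the lower-right n×n principal submatrix of A has positive determinant, then det A ≥ ε²·det([A_{ij}]_{2≤i,j≤n+1}) > 0; in particular A is nonsingular. -/
open scoped ComplexOrder

lemma psd_det_nonneg {m : Type*} [Fintype m] [DecidableEq m]
    {M : Matrix m m ℂ} (hM : M.PosSemidef) : 0 ≤ M.det := by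
  rw [hM.1.det_eq_prod_eigenvalues]
  exact Finset.prod_nonneg fun i _ => by
    rw [RCLike.nonneg_iff]
    constructor <;> simp [hM.eigenvalues_nonneg i]

/-- Let `A` be a positive semi-definite `(n+1)×(n+1)` Hermitian matrix with unit
diagonal such that `[(1 − w_j conj(w_i)) A_{ij}]` is positive semi-definite, where
`w₀ = ε > 0` and the remaining `w`'s vanish. If the lower-right `n×n` principal
submatrix `A'` of `A` has positive determinant, then `det A ≥ ε²·det A' > 0`;
in particular `A` is nonsingular. -/
theorem det_lower_bound_of_perturbed_posSemidef (n : ℕ)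
    (A : Matrix (Fin (n + 1)) (Fin (n + 1)) ℂ)
    (hA : A.PosSemidef) (hdiag : ∀ i, A i i = 1) (ε : ℝ) (hε : 0 < ε)
    (hB : (Matrix.of fun i j : Fin (n + 1) =>
      (1 - (if j = 0 then (ε : ℂ) else 0) *
          (starRingEnd ℂ) (if i = 0 then (ε : ℂ) else 0)) * A i j).PosSemidef)
    (hdet : 0 < (A.submatrix Fin.succ Fin.succ).det) :
    (ε : ℂ) ^ 2 * (A.submatrix Fin.succ Fin.succ).det ≤ A.det ∧ 0 < A.det := by
  set B : Matrix (Fin (n + 1)) (Fin (n + 1)) ℂ := Matrix.of fun i j : Fin (n + 1) =>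
      (1 - (if j = 0 then (ε : ℂ) else 0) *
          (starRingEnd ℂ) (if i = 0 then (ε : ℂ) else 0)) * A i j with hBdef
  have hBeq : B = A.updateRow 0
      (A 0 + (-(ε : ℂ) ^ 2) • (Pi.single (0 : Fin (n + 1)) (1 : ℂ) : Fin (n + 1) → ℂ)) := by
    ext i j
    by_cases hi : i = 0
    · subst hi
      by_cases hj : j = 0 <;>
        simp [hBdef, hj, Matrix.updateRow_self, Pi.single_apply, hdiag 0, sq] <;> ring
    · simp [hBdef, hi, Matrix.updateRow_ne hi]
  have hMdet : (A.updateRow 0 (Pi.single (0 : Fin (n + 1)) (1 : ℂ))).det =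
      (A.submatrix Fin.succ Fin.succ).det := by
    rw [Matrix.det_succ_row_zero]
    rw [Fintype.sum_eq_single (0 : Fin (n + 1))]
    · simp only [Matrix.updateRow_self, Pi.single_eq_same, Fin.val_zero, pow_zero, one_mul,
        mul_one]
      rfl
    · intro j hj
      simp [Matrix.updateRow_self, Pi.single_apply, hj]
  have hBdet : B.det = A.det - (ε : ℂ) ^ 2 * (A.submatrix Fin.succ Fin.succ).det := by
    rw [hBeq, Matrix.det_updateRow_add, Matrix.det_updateRow_smul, Matrix.updateRow_eq_self,
      hMdet]
    ring
  have hB0 : 0 ≤ B.det := psd_det_nonneg hB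
  have key : (ε : ℂ) ^ 2 * (A.submatrix Fin.succ Fin.succ).det ≤ A.det := by
    have := hB0
    rw [hBdet, sub_nonneg] at this
    exact this
  refine ⟨key, lt_of_lt_of_le ?_ key⟩
  have hε2 : (0 : ℂ) < (ε : ℂ) ^ 2 := by
    rw [show ((ε : ℂ) ^ 2) = ((ε ^ 2 : ℝ) : ℂ) by push_cast; ring]
    rw [Complex.zero_lt_real]
    positivity
  exact mul_pos hε2 hdet
end

section
/- Let ρ(λ,μ) = 1/(1 − λ²·conj(μ)²) + 1/(1 − λ³·conj(μ)³) for λ, μ in the unit disk ⅅ, and let ω = e^{2πi/3}. Then for every z ∈ ⅅ the kernel functions satisfy the linear relation ρ_z − ρ_{ωz} + ρ_{−ωz} − ρ_{−z} = 0, i.e. ρ(λ, z) − ρ(λ, ωz) + ρ(λ, −ωz) − ρ(λ, −z) = 0 for all λ ∈ ⅅ; moreover, for z ≠ 0, any two of the four functions ρ_z, ρ_{ωz}, ρ_{−ωz}, ρ_{−z} are linearly independent. -/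
lemma kernel_den_ne (x : ℂ) (hx : ‖x‖ < 1) : (1 : ℂ) - x ≠ 0 := by
  intro h
  rw [sub_eq_zero] at h
  rw [← h] at hx
  simp at hx

lemma kernel_aux_s17 (s₁ t₁ s₂ t₂ : ℂ)
    (h : ∀ lam : ℂ, ‖lam‖ < 1 →
      (1 - lam ^ 2 * s₁)⁻¹ + (1 - lam ^ 3 * t₁)⁻¹ =
      (1 - lam ^ 2 * s₂)⁻¹ + (1 - lam ^ 3 * t₂)⁻¹) :
    s₁ = s₂ ∧ t₁ = t₂ := by
  set M : ℝ := ‖s₁‖ + ‖s₂‖ + ‖t₁‖ + ‖t₂‖ + 1 with hM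
  have hM1 : 1 ≤ M := by
    have a1 := norm_nonneg s₁; have a2 := norm_nonneg s₂
    have a3 := norm_nonneg t₁; have a4 := norm_nonneg t₂
    rw [hM]; linarith
  have hMpos : 0 < M := by linarith
  set ε : ℝ := 1 / (2 * M) with hε
  have hεpos : 0 < ε := by positivity
  have hεle : ε ≤ 1 / 2 := by
    rw [hε, div_le_div_iff₀ (by positivity) (by norm_num)]
    linarith
  have hεM : ε * M = 1/2 := by rw [hε]; field_simp
  have hsmall : ∀ lam : ℂ, ‖lam‖ ≤ ε →
      ‖lam ^ 2 * s₁‖ < 1 ∧ ‖lam ^ 3 * t₁‖ < 1 ∧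
      ‖lam ^ 2 * s₂‖ < 1 ∧ ‖lam ^ 3 * t₂‖ < 1 ∧ ‖lam‖ < 1 := by
    intro lam hlam
    have h0 : (0:ℝ) ≤ ‖lam‖ := norm_nonneg lam
    have hl1 : ‖lam‖ ≤ 1/2 := le_trans hlam hεle
    have key2 : ∀ s : ℂ, ‖s‖ ≤ M → ‖lam ^ 2 * s‖ < 1 := by
      intro s hs
      rw [norm_mul, norm_pow]
      calc ‖lam‖ ^ 2 * ‖s‖ ≤ ε * (1/2) * M := by
            have h2 : ‖lam‖ ^ 2 ≤ ε * (1/2) := by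
              rw [sq]; exact mul_le_mul hlam hl1 h0 (le_of_lt hεpos)
            exact mul_le_mul h2 hs (norm_nonneg s) (by positivity)
        _ = 1/2 * (1/2) := by rw [mul_comm ε (1/2:ℝ), mul_assoc, hεM]
        _ < 1 := by norm_num
    have key3 : ∀ t : ℂ, ‖t‖ ≤ M → ‖lam ^ 3 * t‖ < 1 := by
      intro t ht
      have he : lam ^ 3 * t = lam * (lam ^ 2 * t) := by ring
      rw [he, norm_mul]
      calc ‖lam‖ * ‖lam ^ 2 * t‖ ≤ (1/2) * 1 :=
            mul_le_mul hl1 (le_of_lt (key2 t ht)) (norm_nonneg _) (by norm_num)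
        _ < 1 := by norm_num
    have hs1 : ‖s₁‖ ≤ M := by rw [hM]; have := norm_nonneg s₂; have := norm_nonneg t₁; have := norm_nonneg t₂; linarith
    have hs2 : ‖s₂‖ ≤ M := by rw [hM]; have := norm_nonneg s₁; have := norm_nonneg t₁; have := norm_nonneg t₂; linarith
    have ht1 : ‖t₁‖ ≤ M := by rw [hM]; have := norm_nonneg s₁; have := norm_nonneg s₂; have := norm_nonneg t₂; linarith
    have ht2 : ‖t₂‖ ≤ M := by rw [hM]; have := norm_nonneg s₁; have := norm_nonneg s₂; have := norm_nonneg t₁; linarith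
    exact ⟨key2 s₁ hs1, key3 t₁ ht1, key2 s₂ hs2, key3 t₂ ht2, lt_of_le_of_lt hl1 (by norm_num)⟩
  set G : ℂ → ℂ := fun lam =>
    (s₁ - s₂) * ((1 - lam ^ 2 * s₁)⁻¹ * (1 - lam ^ 2 * s₂)⁻¹) +
      lam * (t₁ - t₂) * ((1 - lam ^ 3 * t₁)⁻¹ * (1 - lam ^ 3 * t₂)⁻¹) with hG
  have hGzero : ∀ lam : ℂ, lam ≠ 0 → ‖lam‖ ≤ ε → G lam = 0 := by
    intro lam hne hlam
    obtain ⟨d1, d2, d3, d4, d5⟩ := hsmall lam hlam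
    have A := kernel_den_ne _ d1
    have B := kernel_den_ne _ d2
    have C := kernel_den_ne _ d3
    have D := kernel_den_ne _ d4
    have heq := h lam d5
    have key : lam ^ 2 * G lam = 0 := by
      have expand : lam ^ 2 * G lam =
          ((1 - lam ^ 2 * s₁)⁻¹ + (1 - lam ^ 3 * t₁)⁻¹) -
          ((1 - lam ^ 2 * s₂)⁻¹ + (1 - lam ^ 3 * t₂)⁻¹) := by
        rw [hG]
        field_simp
        ring
      rw [expand, heq, sub_self]
    rcases mul_eq_zero.mp key with h' | h'
    · exact absurd (pow_eq_zero_iff (by norm_num)|>.mp h') hne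
    · exact h'
  have hc : ContinuousAt G 0 := by
    have c1 : ContinuousAt (fun lam : ℂ => (1 - lam ^ 2 * s₁)⁻¹) 0 :=
      ContinuousAt.inv₀ (by fun_prop) (by norm_num)
    have c2 : ContinuousAt (fun lam : ℂ => (1 - lam ^ 3 * t₁)⁻¹) 0 :=
      ContinuousAt.inv₀ (by fun_prop) (by norm_num)
    have c3 : ContinuousAt (fun lam : ℂ => (1 - lam ^ 2 * s₂)⁻¹) 0 :=
      ContinuousAt.inv₀ (by fun_prop) (by norm_num)
    have c4 : ContinuousAt (fun lam : ℂ => (1 - lam ^ 3 * t₂)⁻¹) 0 :=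
      ContinuousAt.inv₀ (by fun_prop) (by norm_num)
    exact (continuousAt_const.mul (c1.mul c3)).add
      ((continuousAt_id.mul continuousAt_const).mul (c2.mul c4))
  set u : ℕ → ℂ := fun n => ((ε / (n + 2) : ℝ) : ℂ) with hu
  have hu0 : Filter.Tendsto u Filter.atTop (nhds 0) := by
    rw [hu]
    have : Filter.Tendsto (fun n : ℕ => (ε / (n + 2) : ℝ)) Filter.atTop (nhds 0) := by
      apply Filter.Tendsto.div_atTop tendsto_const_nhds
      exact Filter.tendsto_atTop_add_const_right _ 2 (tendsto_natCast_atTop_atTop)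
    have h2 := (Complex.continuous_ofReal.tendsto 0).comp this
    simpa [Function.comp_def] using h2
  have huz : ∀ n, G (u n) = 0 := by
    intro n
    apply hGzero
    · rw [hu]
      simp only [ne_eq, Complex.ofReal_eq_zero]
      positivity
    · rw [hu]
      rw [Complex.norm_real, Real.norm_eq_abs, abs_of_pos (by positivity)]
      rw [div_le_iff₀ (by positivity)]
      nlinarith [hεpos]
  have hG0 : G 0 = 0 := by
    have h2 : Filter.Tendsto (fun n => G (u n)) Filter.atTop (nhds (G 0)) := hc.tendsto.comp hu0
    have h3 : Filter.Tendsto (fun _ : ℕ => (0:ℂ)) Filter.atTop (nhds (G 0)) := by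
      simpa [huz] using h2
    exact tendsto_nhds_unique h3 tendsto_const_nhds
  have hs : s₁ = s₂ := by
    have he : G 0 = s₁ - s₂ := by rw [hG]; simp
    rw [he] at hG0
    exact sub_eq_zero.mp hG0
  refine ⟨hs, ?_⟩
  set lam₀ : ℂ := ((ε / 2 : ℝ) : ℂ) with hl₀
  have hlabs : ‖lam₀‖ ≤ ε := by
    rw [hl₀, Complex.norm_real, Real.norm_eq_abs, abs_of_pos (by positivity)]
    linarith
  obtain ⟨d1, d2, d3, d4, d5⟩ := hsmall lam₀ hlabs
  have B := kernel_den_ne _ d2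
  have D := kernel_den_ne _ d4
  have heq := h lam₀ d5
  rw [hs] at heq
  have hBD : (1 - lam₀ ^ 3 * t₁)⁻¹ = (1 - lam₀ ^ 3 * t₂)⁻¹ := add_left_cancel heq
  have hBD' : (1 : ℂ) - lam₀ ^ 3 * t₁ = 1 - lam₀ ^ 3 * t₂ := inv_injective hBD
  have hne : lam₀ ≠ 0 := by
    rw [hl₀]
    simp only [ne_eq, Complex.ofReal_eq_zero]
    positivity
  have hmm : lam₀ ^ 3 * t₁ = lam₀ ^ 3 * t₂ := by linear_combination -hBD'
  exact mul_left_cancel₀ (pow_ne_zero 3 hne) hmm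

/-- For `ρ(λ,μ) = 1/(1 − λ²conj(μ)²) + 1/(1 − λ³conj(μ)³)` on the unit disk and
`ω = e^{2πi/3}`: for every `z` in the disk the kernel functions satisfy
`ρ_z − ρ_{ωz} + ρ_{−ωz} − ρ_{−z} = 0`, while for `z ≠ 0` any two of the four
functions `ρ_z, ρ_{ωz}, ρ_{−ωz}, ρ_{−z}` are linearly independent. -/
theorem kernel_linear_relation_counterexample (ρ : ℂ → ℂ → ℂ)
    (hρ : ∀ lam mu : ℂ, ρ lam mu =
      (1 - lam ^ 2 * (starRingEnd ℂ) mu ^ 2)⁻¹ + (1 - lam ^ 3 * (starRingEnd ℂ) mu ^ 3)⁻¹)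
    (ω : ℂ) (hω : ω = Complex.exp (2 * Real.pi * Complex.I / 3)) :
    (∀ z : ℂ, ‖z‖ < 1 → ∀ lam : ℂ, ‖lam‖ < 1 →
      ρ lam z - ρ lam (ω * z) + ρ lam (-(ω * z)) - ρ lam (-z) = 0) ∧
    ∀ z : ℂ, ‖z‖ < 1 → z ≠ 0 → ∀ i j : Fin 4, i ≠ j →
      LinearIndependent ℂ
        ![fun lam : {lam : ℂ // ‖lam‖ < 1} =>
            ρ lam.1 (![z, ω * z, -(ω * z), -z] i),
          fun lam : {lam : ℂ // ‖lam‖ < 1} =>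
            ρ lam.1 (![z, ω * z, -(ω * z), -z] j)] := by
  -- basic facts about ω
  have hω3 : ω ^ 3 = 1 := by
    rw [hω, ← Complex.exp_nat_mul]
    have : ((3:ℕ) : ℂ) * (2 * Real.pi * Complex.I / 3) = 2 * Real.pi * Complex.I := by
      push_cast; ring
    rw [this, Complex.exp_two_pi_mul_I]
  have habs : ‖ω‖ = 1 := by
    rw [hω, Complex.norm_exp]
    have : (2 * (Real.pi:ℂ) * Complex.I / 3).re = 0 := by simp [Complex.div_re]
    rw [this, Real.exp_zero]
  have hω0 : ω ≠ 0 := by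
    intro h; rw [h] at hω3; simp at hω3
  have hconj : (starRingEnd ℂ) ω = ω ^ 2 := by
    have h1 : ω * (starRingEnd ℂ) ω = 1 := by
      rw [Complex.mul_conj, ← Complex.sq_norm, habs]; norm_num
    have h2 : ω * ω ^ 2 = 1 := by rw [← pow_succ']; exact hω3
    exact mul_left_cancel₀ hω0 (h1.trans h2.symm)
  have hω1 : ω ≠ 1 := by
    intro h
    rw [h] at hω
    obtain ⟨n, hn⟩ := Complex.exp_eq_one_iff.mp hω.symm
    have hπ : (Real.pi : ℂ) ≠ 0 := by simp [Real.pi_ne_zero]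
    have hI : Complex.I ≠ 0 := Complex.I_ne_zero
    have hcan : (1 : ℂ) * (2 * (Real.pi:ℂ) * Complex.I) = (3 * n) * (2 * (Real.pi:ℂ) * Complex.I) := by
      field_simp at hn
      linear_combination (2 * (Real.pi:ℂ) * Complex.I) * hn
    have hcc : (1 : ℂ) = 3 * n := mul_right_cancel₀ (by simp [hπ, hI]) hcan
    have h3 : (1:ℤ) = 3 * n := by exact_mod_cast hcc
    omega
  -- conjugate power computations
  have hpow : ∀ z : ℂ,
      (starRingEnd ℂ) (ω * z) ^ 2 = ω * (starRingEnd ℂ) z ^ 2 ∧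
      (starRingEnd ℂ) (ω * z) ^ 3 = (starRingEnd ℂ) z ^ 3 ∧
      (starRingEnd ℂ) (-(ω * z)) ^ 2 = ω * (starRingEnd ℂ) z ^ 2 ∧
      (starRingEnd ℂ) (-(ω * z)) ^ 3 = -(starRingEnd ℂ) z ^ 3 ∧
      (starRingEnd ℂ) (-z) ^ 2 = (starRingEnd ℂ) z ^ 2 ∧
      (starRingEnd ℂ) (-z) ^ 3 = -(starRingEnd ℂ) z ^ 3 := by
    intro z
    set c := (starRingEnd ℂ) z with hc
    refine ⟨?_, ?_, ?_, ?_, ?_, ?_⟩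
    · simp only [map_mul, hconj]; linear_combination c ^ 2 * ω * hω3
    · simp only [map_mul, hconj]; linear_combination c ^ 3 * (ω ^ 3 + 1) * hω3
    · simp only [map_neg, map_mul, hconj]; linear_combination c ^ 2 * ω * hω3
    · simp only [map_neg, map_mul, hconj]; linear_combination (-(c ^ 3)) * (ω ^ 3 + 1) * hω3
    · simp only [map_neg]; ring
    · simp only [map_neg]; ring
  constructor
  · intro z hz lam hlam
    obtain ⟨h1, h2, h3, h4, h5, h6⟩ := hpow z
    rw [hρ, hρ, hρ, hρ, h1, h2, h3, h4, h5, h6]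
    ring
  · intro z hz hz0 i j hij
    set c := (starRingEnd ℂ) z with hc
    have hc0 : c ≠ 0 := by
      rw [hc]
      simpa using hz0
    set s : Fin 4 → ℂ := ![c ^ 2, ω * c ^ 2, ω * c ^ 2, c ^ 2] with hsdef
    set t : Fin 4 → ℂ := ![c ^ 3, c ^ 3, -c ^ 3, -c ^ 3] with htdef
    obtain ⟨h1, h2, h3, h4, h5, h6⟩ := hpow z
    have key : ∀ k : Fin 4, ∀ lam : ℂ,
        ρ lam (![z, ω * z, -(ω * z), -z] k) = (1 - lam ^ 2 * s k)⁻¹ + (1 - lam ^ 3 * t k)⁻¹ := by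
      intro k lam
      fin_cases k <;>
        simp only [hsdef, htdef, Fin.zero_eta, Fin.mk_one, Fin.reduceFinMk, Matrix.cons_val_zero,
          Matrix.cons_val_one, Matrix.head_cons, Matrix.cons_val_two, Matrix.tail_cons,
          Matrix.cons_val_three, Fin.isValue] <;>
        rw [hρ]
      · rw [h1, h2]
      · rw [h3, h4]
      · rw [h5, h6]
    have h0mem : ‖(0 : ℂ)‖ < 1 := by simp
    rw [linearIndependent_fin2]
    constructor
    · simp only [Matrix.cons_val_one, Matrix.head_cons, Matrix.cons_val_zero]
      intro hg0
      have := congrFun hg0 ⟨0, h0mem⟩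
      rw [key j 0] at this
      norm_num at this
    · intro a ha
      simp only [Matrix.cons_val_one, Matrix.head_cons, Matrix.cons_val_zero] at ha
      have h0 := congrFun ha ⟨0, h0mem⟩
      simp only [Pi.smul_apply, smul_eq_mul] at h0
      rw [key j 0, key i 0] at h0
      norm_num at h0
      -- h0 : a = 1 hopefully (from a * 2 = 2)
      have haux : ∀ lam : ℂ, ‖lam‖ < 1 →
          (1 - lam ^ 2 * s j)⁻¹ + (1 - lam ^ 3 * t j)⁻¹ =
          (1 - lam ^ 2 * s i)⁻¹ + (1 - lam ^ 3 * t i)⁻¹ := by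
        intro lam hlam
        have := congrFun ha ⟨lam, hlam⟩
        simp only [Pi.smul_apply, smul_eq_mul] at this
        rw [key j lam, key i lam, h0, one_mul] at this
        exact this
      obtain ⟨hs, ht⟩ := kernel_aux_s17 _ _ _ _ haux
      have hωne : ω * c ^ 2 ≠ c ^ 2 := by
        intro h
        exact hω1 (mul_right_cancel₀ (pow_ne_zero 2 hc0) (h.trans (one_mul _).symm))
      have hcne : -c ^ 3 ≠ c ^ 3 := by
        intro h
        apply hc0
        have h2 : (2:ℂ) * c ^ 3 = 0 := by linear_combination -h
        have h3 : c ^ 3 = 0 := by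
          rcases mul_eq_zero.mp h2 with h' | h'
          · norm_num at h'
          · exact h'
        exact pow_eq_zero_iff (by norm_num) |>.mp h3
      fin_cases i <;> fin_cases j <;>
        simp only [hsdef, htdef, Fin.zero_eta, Fin.mk_one, Fin.reduceFinMk, Matrix.cons_val_zero,
          Matrix.cons_val_one, Matrix.head_cons, Matrix.cons_val_two, Matrix.tail_cons,
          Matrix.cons_val_three, Fin.isValue] at hs ht hij ⊢ <;>
        first
          | exact hij rfl
          | exact hωne hs
          | exact hωne hs.symm
          | exact hcne ht
          | exact hcne ht.symm
end
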